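/- Let A be a Noetherian local ring with maximal ideal 𝔪, let f₁, …, f_p ∈ 𝔪 be a regular sequence in A, and let g₁, …, g_p ∈ A be arbitrary elements. Then f₁ + εg₁, …, f_p + εg_p is a regular sequence in the ring of dual numbers A[ε]. -/

import Mathlib

open DualNumber RingTheory.Sequence

section Aux

variable {R : Type*} [CommRing R]

private lemma ofList_ofFn' {n : ℕ} (w : Fin n → R) :
    Ideal.ofList (List.ofFn w) = Ideal.span (Set.range w) := by
  unfold Ideal.ofList
  congr 1
  ext a
  exact List.mem_ofFn

private lemma isWeaklyRegular_iff_mem' (rs : List R) :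
    IsWeaklyRegular R rs ↔ ∀ i (h : i < rs.length) (a : R),
      a * rs[i] ∈ Ideal.ofList (rs.take i) → a ∈ Ideal.ofList (rs.take i) := by
  rw [RingTheory.Sequence.isWeaklyRegular_iff]
  refine forall₂_congr fun i h => ?_
  have hI : (Ideal.ofList (rs.take i) • ⊤ : Submodule R R) = Ideal.ofList (rs.take i) := by
    rw [smul_eq_mul, Ideal.mul_top]
  rw [hI]
  set I := Ideal.ofList (rs.take i)
  constructor
  · intro hr a ha
    have h0 : rs[i] • (Submodule.Quotient.mk a : R ⧸ (I : Submodule R R)) = rs[i] • 0 := by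
      rw [smul_zero, ← Submodule.Quotient.mk_smul, Submodule.Quotient.mk_eq_zero]
      simpa [smul_eq_mul, mul_comm] using ha
    have := hr h0
    rwa [← Submodule.Quotient.mk_eq_zero (p := (I : Submodule R R))]
  · intro hmem x y hxy
    obtain ⟨a, rfl⟩ := Submodule.Quotient.mk_surjective _ x
    obtain ⟨b, rfl⟩ := Submodule.Quotient.mk_surjective _ y
    simp only [← Submodule.Quotient.mk_smul, Submodule.Quotient.eq] at hxy
    rw [Submodule.Quotient.eq]
    refine hmem _ ?_
    have heq : rs[i] • a - rs[i] • b = (a - b) * rs[i] := by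
      simp only [smul_eq_mul]; ring
    rwa [heq] at hxy

private lemma isWeaklyRegular_ofFn_iff' {n : ℕ} (w : Fin n → R) :
    IsWeaklyRegular R (List.ofFn w) ↔
      ∀ (j : Fin n) (a : R),
        a * w j ∈ Ideal.span (Set.range (Fin.take j.1 j.2.le w)) →
        a ∈ Ideal.span (Set.range (Fin.take j.1 j.2.le w)) := by
  rw [isWeaklyRegular_iff_mem']
  have hlen : (List.ofFn w).length = n := List.length_ofFn
  have hTake : ∀ (m : ℕ) (hm : m ≤ n),
      Ideal.ofList ((List.ofFn w).take m) = Ideal.span (Set.range (Fin.take m hm w)) := by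
    intro m hm
    rw [← Fin.ofFn_take_eq_take_ofFn hm, ofList_ofFn']
  constructor
  · intro h j a ha
    have h' := h j.1 (by omega) a
    rw [hTake j.1 j.2.le] at h'
    have hg : (List.ofFn w)[j.1]'(by omega) = w j := by
      simp [List.getElem_ofFn]
    rw [hg] at h'
    exact h' ha
  · intro h i hi a ha
    have hi' : i < n := by omega
    have h' := h ⟨i, hi'⟩ a
    rw [hTake i hi'.le] at ha ⊢
    have hg : (List.ofFn w)[i] = w ⟨i, hi'⟩ := by
      simp [List.getElem_ofFn]
    rw [hg] at ha
    exact h' ha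

private lemma syzygy' : ∀ (k : ℕ) (w : Fin k → R),
    (∀ (j : Fin k) (a : R),
      a * w j ∈ Ideal.span (Set.range (Fin.take j.1 j.2.le w)) →
      a ∈ Ideal.span (Set.range (Fin.take j.1 j.2.le w))) →
    ∀ (u : Fin k → R), (∑ i, u i * w i = 0) →
    ∀ j, u j ∈ Ideal.span (Set.range w) := by
  intro k
  induction k with
  | zero => intro w hw u hu j; exact j.elim0
  | succ k ih =>
    intro w hw u hu j
    have hcast : ∀ i : Fin k, Fin.castLE k.le_succ i = Fin.castSucc i := fun i => rfl
    rw [Fin.sum_univ_castSucc] at hu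
    have hsum := hu
    have hmemS : ∀ i : Fin k, w i.castSucc ∈ Set.range (Fin.take k k.le_succ w) := by
      intro i; exact ⟨i, by rw [Fin.take_apply, hcast]⟩
    have h1 : u (Fin.last k) * w (Fin.last k)
        ∈ Ideal.span (Set.range (Fin.take k k.le_succ w)) := by
      have heq : u (Fin.last k) * w (Fin.last k)
          = -∑ i : Fin k, u i.castSucc * w i.castSucc :=
        eq_neg_of_add_eq_zero_right hsum
      rw [heq]
      exact neg_mem (Ideal.sum_mem _ fun i _ =>
        Ideal.mul_mem_left _ _ (Ideal.subset_span (hmemS i)))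
    have h2 : u (Fin.last k) ∈ Ideal.span (Set.range (Fin.take k k.le_succ w)) :=
      hw (Fin.last k) _ h1
    rw [Ideal.mem_span_range_iff_exists_fun] at h2
    obtain ⟨c, hc⟩ := h2
    simp only [smul_eq_mul, Fin.take_apply, hcast] at hc
    set w' : Fin k → R := fun i => w i.castSucc with hw'def
    have hw' : ∀ (j : Fin k) (a : R),
        a * w' j ∈ Ideal.span (Set.range (Fin.take j.1 j.2.le w')) →
        a ∈ Ideal.span (Set.range (Fin.take j.1 j.2.le w')) := by
      intro j a
      have hr : Set.range (Fin.take j.1 j.2.le w')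
          = Set.range (Fin.take j.1 (Fin.castSucc j).2.le w) := by
        congr 1
      rw [hr]
      exact hw j.castSucc a
    set u' : Fin k → R := fun i => u i.castSucc + c i * w (Fin.last k) with hu'def
    have hu' : ∑ i, u' i * w' i = 0 := by
      have : ∑ i, u' i * w' i
          = ∑ i : Fin k, u i.castSucc * w i.castSucc
            + w (Fin.last k) * ∑ i, c i * w i.castSucc := by
        rw [Finset.mul_sum, ← Finset.sum_add_distrib]
        refine Finset.sum_congr rfl fun i _ => by simp [hu'def, hw'def]; ring
      rw [this, hc, mul_comm]
      exact hu
    have hfin := ih w' hw' u' hu'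
    have hsub : Ideal.span (Set.range w') ≤ Ideal.span (Set.range w) :=
      Ideal.span_mono (Set.range_comp_subset_range _ _)
    refine Fin.lastCases ?_ ?_ j
    · rw [← hc]
      exact Ideal.sum_mem _ fun i _ =>
        Ideal.mul_mem_left _ _ (Ideal.subset_span ⟨i.castSucc, rfl⟩)
    · intro i
      have : u i.castSucc = u' i - c i * w (Fin.last k) := by simp [hu'def]
      rw [this]
      exact Ideal.sub_mem _ (hsub (hfin i))
        (Ideal.mul_mem_left _ _ (Ideal.subset_span ⟨Fin.last k, rfl⟩))

end Aux

/-- Let `A` be a Noetherian local ring with maximal ideal `𝔪`, let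
`f₁, …, f_p ∈ 𝔪` be a regular sequence in `A`, and let `g₁, …, g_p ∈ A` be arbitrary.
Then `f₁ + εg₁, …, f_p + εg_p` is a regular sequence in the ring of dual numbers `A[ε]`. -/
theorem stmt1 (A : Type*) [CommRing A] [IsLocalRing A] [IsNoetherianRing A]
    (p : ℕ) (f g : Fin p → A)
    (hfm : ∀ i, f i ∈ IsLocalRing.maximalIdeal A)
    (hreg : RingTheory.Sequence.IsRegular A (List.ofFn f)) :
    RingTheory.Sequence.IsRegular (DualNumber A)
      (List.ofFn fun i =>
        algebraMap A (DualNumber A) (f i) + ε * algebraMap A (DualNumber A) (g i)) := by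
  classical
  set F : Fin p → DualNumber A := fun i =>
    algebraMap A (DualNumber A) (f i) + ε * algebraMap A (DualNumber A) (g i) with hFdef
  have hFst : ∀ i, (F i).fst = f i := by
    intro i
    rw [hFdef]
    rw [TrivSqZeroExt.fst_add, TrivSqZeroExt.fst_mul]
    simp [TrivSqZeroExt.algebraMap_eq_inl]
  have hSnd : ∀ i, (F i).snd = g i := by
    intro i
    rw [hFdef]
    rw [TrivSqZeroExt.snd_add, TrivSqZeroExt.snd_mul]
    simp [TrivSqZeroExt.algebraMap_eq_inl]
  -- regularity of the `f`-sequence, in span form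
  have hwf : ∀ (j : Fin p) (a : A),
      a * f j ∈ Ideal.span (Set.range (Fin.take j.1 j.2.le f)) →
      a ∈ Ideal.span (Set.range (Fin.take j.1 j.2.le f)) :=
    (isWeaklyRegular_ofFn_iff' f).mp hreg.toIsWeaklyRegular
  constructor
  case toIsWeaklyRegular =>
    rw [isWeaklyRegular_ofFn_iff']
    intro j a ha
    set J := Ideal.span (Set.range (Fin.take j.1 j.2.le F)) with hJdef
    set Jf := Ideal.span (Set.range (Fin.take j.1 j.2.le f)) with hJfdef
    -- facts about multiplication
    have fstmul : ∀ (x y : DualNumber A), (x * y).fst = x.fst * y.fst := fun _ _ => rfl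
    have sndmul : ∀ (x y : DualNumber A), (x * y).snd = x.fst * y.snd + x.snd * y.fst := by
      intro x y
      rw [TrivSqZeroExt.snd_mul]
      simp [smul_eq_mul, mul_comm]
    obtain ⟨c, hc⟩ := Ideal.mem_span_range_iff_exists_fun.mp ha
    simp only [smul_eq_mul, Fin.take_apply] at hc
    have hc1 : ∑ i : Fin j.1, (c i).fst * f (Fin.castLE j.2.le i) = a.fst * f j := by
      have := congrArg TrivSqZeroExt.fst hc
      simpa [TrivSqZeroExt.fst_sum, fstmul, hFst] using this
    have hc2 : ∑ i : Fin j.1, ((c i).fst * g (Fin.castLE j.2.le i)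
        + (c i).snd * f (Fin.castLE j.2.le i)) = a.fst * g j + a.snd * f j := by
      have := congrArg TrivSqZeroExt.snd hc
      simpa [TrivSqZeroExt.snd_sum, sndmul, hFst, hSnd] using this
    -- step 1 : a.fst lies in Jf
    have ha1 : a.fst ∈ Jf := by
      refine hwf j a.fst ?_
      rw [← hc1]
      exact Ideal.sum_mem _ fun i _ =>
        Ideal.mul_mem_left _ _ (Ideal.subset_span ⟨i, rfl⟩)
    obtain ⟨α, hα⟩ := Ideal.mem_span_range_iff_exists_fun.mp ha1
    simp only [smul_eq_mul, Fin.take_apply] at hα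
    set b' : A := a.snd - ∑ i : Fin j.1, α i * g (Fin.castLE j.2.le i) with hb'def
    have hmemJ : ∀ i : Fin j.1, F (Fin.castLE j.2.le i) ∈ J :=
      fun i => Ideal.subset_span ⟨i, rfl⟩
    have hdiff : a - ∑ i : Fin j.1, TrivSqZeroExt.inl (α i) * F (Fin.castLE j.2.le i)
        = TrivSqZeroExt.inr b' := by
      refine TrivSqZeroExt.ext ?_ ?_
      · simp only [TrivSqZeroExt.fst_sub, TrivSqZeroExt.fst_sum, fstmul,
          TrivSqZeroExt.fst_inl, TrivSqZeroExt.fst_inr, hFst, hα]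
        ring
      · simp only [TrivSqZeroExt.snd_sub, TrivSqZeroExt.snd_sum, sndmul,
          TrivSqZeroExt.fst_inl, TrivSqZeroExt.snd_inl, TrivSqZeroExt.snd_inr,
          hFst, hSnd, hb'def, zero_mul, add_zero]
    have hinrb' : TrivSqZeroExt.inr (b' * f j) ∈ J := by
      have h3 : TrivSqZeroExt.inr b' * F j ∈ J := by
        rw [← hdiff, sub_mul]
        refine Ideal.sub_mem _ ha ?_
        exact Ideal.mul_mem_right _ _ (Ideal.sum_mem _ fun i _ =>
          Ideal.mul_mem_left _ _ (hmemJ i))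
      have h4 : (TrivSqZeroExt.inr b' : DualNumber A) * F j
          = TrivSqZeroExt.inr (b' * f j) := by
        refine TrivSqZeroExt.ext ?_ ?_
        · simp [fstmul]
        · simp [sndmul, hFst, hSnd, mul_comm]
      rwa [h4] at h3
    obtain ⟨d, hd⟩ := Ideal.mem_span_range_iff_exists_fun.mp hinrb'
    simp only [smul_eq_mul, Fin.take_apply] at hd
    have hd1 : ∑ i : Fin j.1, (d i).fst * f (Fin.castLE j.2.le i) = 0 := by
      have := congrArg TrivSqZeroExt.fst hd
      simpa [TrivSqZeroExt.fst_sum, fstmul, hFst] using this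
    have hd2 : ∑ i : Fin j.1, ((d i).fst * g (Fin.castLE j.2.le i)
        + (d i).snd * f (Fin.castLE j.2.le i)) = b' * f j := by
      have := congrArg TrivSqZeroExt.snd hd
      simpa [TrivSqZeroExt.snd_sum, sndmul, hFst, hSnd] using this
    -- the syzygy argument
    have hwtake : ∀ (jj : Fin j.1) (a : A),
        a * (Fin.take j.1 j.2.le f) jj
          ∈ Ideal.span (Set.range (Fin.take jj.1 jj.2.le (Fin.take j.1 j.2.le f))) →
        a ∈ Ideal.span (Set.range (Fin.take jj.1 jj.2.le (Fin.take j.1 j.2.le f))) := by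
      intro jj aa
      have hr : Set.range (Fin.take jj.1 jj.2.le (Fin.take j.1 j.2.le f))
          = Set.range (Fin.take jj.1 (Fin.castLE j.2.le jj).2.le f) := by
        rw [Fin.take_take]
      rw [hr]
      exact hwf (Fin.castLE j.2.le jj) aa
    have hsyz := syzygy' j.1 (Fin.take j.1 j.2.le f) hwtake (fun i => (d i).fst)
      (by simpa [Fin.take_apply] using hd1)
    have hfmem : b' * f j ∈ Jf := by
      rw [← hd2]
      refine Ideal.sum_mem _ fun i _ => Ideal.add_mem _ ?_ ?_
      · exact Ideal.mul_mem_right _ _ (hsyz i)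
      · exact Ideal.mul_mem_left _ _ (Ideal.subset_span ⟨i, rfl⟩)
    have hb'mem : b' ∈ Jf := hwf j b' hfmem
    obtain ⟨β, hβ⟩ := Ideal.mem_span_range_iff_exists_fun.mp hb'mem
    simp only [smul_eq_mul, Fin.take_apply] at hβ
    have hinr : TrivSqZeroExt.inr b'
        = ∑ i : Fin j.1, TrivSqZeroExt.inr (β i) * F (Fin.castLE j.2.le i) := by
      refine TrivSqZeroExt.ext ?_ ?_
      · simp [TrivSqZeroExt.fst_sum, fstmul]
      · simp [TrivSqZeroExt.snd_sum, sndmul, hFst, hSnd, ← hβ]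
    have : a = (∑ i : Fin j.1, TrivSqZeroExt.inl (α i) * F (Fin.castLE j.2.le i))
        + TrivSqZeroExt.inr b' := by
      rw [← hdiff]; ring
    rw [this]
    refine Ideal.add_mem _ ?_ ?_
    · exact Ideal.sum_mem _ fun i _ => Ideal.mul_mem_left _ _ (hmemJ i)
    · rw [hinr]
      exact Ideal.sum_mem _ fun i _ => Ideal.mul_mem_left _ _ (hmemJ i)
  case top_ne_smul =>
    rw [smul_eq_mul, Ideal.mul_top]
    intro htop
    have h1 : (1 : DualNumber A) ∈ Ideal.ofList (List.ofFn F) := by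
      rw [← htop]; trivial
    rw [ofList_ofFn'] at h1
    have hle : Ideal.span (Set.range F)
        ≤ Ideal.comap (TrivSqZeroExt.fstHom A A A).toRingHom
            (IsLocalRing.maximalIdeal A) := by
      rw [Ideal.span_le]
      rintro x ⟨i, rfl⟩
      show (F i).fst ∈ IsLocalRing.maximalIdeal A
      rw [hFst]
      exact hfm i
    have := hle h1
    simp only [Ideal.mem_comap] at this
    have h1m : (1 : A) ∈ IsLocalRing.maximalIdeal A := by
      simpa using this
    exact (IsLocalRing.maximalIdeal.isMaximal A).ne_top (Ideal.eq_top_of_isUnit_mem _ h1m isUnit_one)
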